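/- For any subspaces A, B of GF(q)^n with dim(A)=a, dim(B)=b, and d_S(A,B)=w, the number of c-dimensional subspaces C with d_S(A,C)=u and d_S(B,C)=s depends only on u, s, w, a, b, c (and not on the particular choice of A and B). -/

import Mathlib

/-- The subspace distance `d_S(U,V) = dim(U+V) - dim(U∩V)`. -/
noncomputable def dS {F : Type} [Field F] {n : ℕ} (U V : Submodule F (Fin n → F)) : ℕ :=
  Module.finrank F ↥(U ⊔ V) - Module.finrank F ↥(U ⊓ V)

open Module Submodule

section Aux
variable {F V : Type*} [Field F] [AddCommGroup V] [Module F V]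

lemma exists_relCompl {W A : Submodule F V} (h : W ≤ A) :
    ∃ C : Submodule F V, C ≤ A ∧ W ⊓ C = ⊥ ∧ W ⊔ C = A := by
  obtain ⟨C₀, hC₀⟩ := Submodule.exists_isCompl (Submodule.comap A.subtype W)
  have hmap : Submodule.map A.subtype (Submodule.comap A.subtype W) = W := by
    rw [Submodule.map_comap_subtype, inf_eq_right.mpr h]
  refine ⟨C₀.map A.subtype, Submodule.map_subtype_le A C₀, ?_, ?_⟩
  · rw [← hmap, ← Submodule.map_inf _ (Submodule.injective_subtype A),
      disjoint_iff.mp hC₀.disjoint, Submodule.map_bot]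
  · rw [← hmap, ← Submodule.map_sup, hC₀.sup_eq_top, Submodule.map_top,
      Submodule.range_subtype]

lemma exists_auto [FiniteDimensional F V] {ι : Type} [DecidableEq ι]
    (p p' : ι → Submodule F V) (hp : DirectSum.IsInternal p) (hp' : DirectSum.IsInternal p')
    (hf : ∀ i, finrank F (p i) = finrank F (p' i)) :
    ∃ e : V ≃ₗ[F] V, ∀ i, (p i).map (e : V →ₗ[F] V) = p' i := by
  have key : ∀ (q q' : ι → Submodule F V) (hq : DirectSum.IsInternal q)
      (hq' : DirectSum.IsInternal q') (g : ∀ i, ↥(q i) ≃ₗ[F] ↥(q' i)) (i : ι) (x : V),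
      x ∈ q i →
      ((LinearEquiv.ofBijective (DirectSum.coeLinearMap q) hq).symm.trans
        ((DFinsupp.mapRange.linearEquiv g).trans (LinearEquiv.ofBijective (DirectSum.coeLinearMap q') hq'))) x ∈ q' i := by
    intro q q' hq hq' g i x hx
    have h1 : (LinearEquiv.ofBijective (DirectSum.coeLinearMap q) hq).symm x
        = DirectSum.of (fun i => ↥(q i)) i ⟨x, hx⟩ := by
      rw [LinearEquiv.symm_apply_eq, LinearEquiv.ofBijective_apply (f := DirectSum.coeLinearMap q) (hf := hq), DirectSum.coeLinearMap_of]
    have h2 : (DFinsupp.mapRange.linearEquiv g) (DirectSum.of (fun i => ↥(q i)) i ⟨x, hx⟩)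
        = DirectSum.of (fun i => ↥(q' i)) i (g i ⟨x, hx⟩) := by
      rw [DFinsupp.mapRange.linearEquiv_apply]
      exact DFinsupp.mapRange_single
    have h3 : ((LinearEquiv.ofBijective (DirectSum.coeLinearMap q) hq).symm.trans
        ((DFinsupp.mapRange.linearEquiv g).trans
          (LinearEquiv.ofBijective (DirectSum.coeLinearMap q') hq'))) x
        = ↑(g i ⟨x, hx⟩) := by
      rw [LinearEquiv.trans_apply, LinearEquiv.trans_apply, h1,
        LinearEquiv.ofBijective_apply (f := DirectSum.coeLinearMap q') (hf := hq')]
      erw [h2]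
      exact DirectSum.coeLinearMap_of _ _ _
    rw [h3]
    exact (g i ⟨x, hx⟩).2
  let f : ∀ i, ↥(p i) ≃ₗ[F] ↥(p' i) := fun i => LinearEquiv.ofFinrankEq _ _ (hf i)
  set e := (LinearEquiv.ofBijective (DirectSum.coeLinearMap p) hp).symm.trans
    ((DFinsupp.mapRange.linearEquiv f).trans (LinearEquiv.ofBijective (DirectSum.coeLinearMap p') hp')) with he
  have hesymm : e.symm = (LinearEquiv.ofBijective (DirectSum.coeLinearMap p') hp').symm.trans
      ((DFinsupp.mapRange.linearEquiv (fun i => (f i).symm)).trans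
        (LinearEquiv.ofBijective (DirectSum.coeLinearMap p) hp)) := rfl
  refine ⟨e, fun i => le_antisymm ?_ ?_⟩
  · rw [Submodule.map_le_iff_le_comap]
    intro x hx
    exact key p p' hp hp' f i x hx
  · intro y hy
    refine ⟨e.symm y, ?_, e.apply_symm_apply y⟩
    rw [hesymm]
    exact key p' p hp' hp (fun i => (f i).symm) i y hy

end Aux

lemma exists_equiv_pair {F V : Type*} [Field F] [AddCommGroup V] [Module F V]
    [FiniteDimensional F V] (A B A' B' : Submodule F V)
    (hA : finrank F A = finrank F A') (hB : finrank F B = finrank F B')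
    (hI : finrank F ↥(A ⊓ B) = finrank F ↥(A' ⊓ B')) :
    ∃ e : V ≃ₗ[F] V, A.map (e : V →ₗ[F] V) = A' ∧ B.map (e : V →ₗ[F] V) = B' := by
  -- decomposition for a pair
  have decomp : ∀ X Y : Submodule F V, ∃ Ca Cb E : Submodule F V,
      Ca ≤ X ∧ (X ⊓ Y) ⊓ Ca = ⊥ ∧ (X ⊓ Y) ⊔ Ca = X ∧
      Cb ≤ Y ∧ (X ⊓ Y) ⊓ Cb = ⊥ ∧ (X ⊓ Y) ⊔ Cb = Y ∧
      IsCompl (X ⊔ Y) E := by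
    intro X Y
    obtain ⟨Ca, h1, h2, h3⟩ := exists_relCompl (inf_le_left : X ⊓ Y ≤ X)
    obtain ⟨Cb, h4, h5, h6⟩ := exists_relCompl (inf_le_right : X ⊓ Y ≤ Y)
    obtain ⟨E, hE⟩ := Submodule.exists_isCompl (X ⊔ Y)
    exact ⟨Ca, Cb, E, h1, h2, h3, h4, h5, h6, hE⟩
  -- internality of the four-piece family
  have internal : ∀ X Y Ca Cb E : Submodule F V,
      Ca ≤ X → (X ⊓ Y) ⊓ Ca = ⊥ → (X ⊓ Y) ⊔ Ca = X →
      Cb ≤ Y → (X ⊓ Y) ⊓ Cb = ⊥ → (X ⊓ Y) ⊔ Cb = Y →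
      IsCompl (X ⊔ Y) E →
      DirectSum.IsInternal (![X ⊓ Y, Ca, Cb, E] : Fin 4 → Submodule F V) := by
    intro X Y Ca Cb E hCaX hCa0 hCaS hCbY hCb0 hCbS hE
    set W := X ⊓ Y with hW
    have hWX : W ≤ X := inf_le_left
    have hWY : W ≤ Y := inf_le_right
    have hCaXY : Ca ≤ X ⊔ Y := hCaX.trans le_sup_left
    have hCbXY : Cb ≤ X ⊔ Y := hCbY.trans le_sup_right
    have hEXY : (X ⊔ Y) ⊓ E = ⊥ := disjoint_iff.mp hE.disjoint
    have hCaY : Ca ⊓ Y = ⊥ := by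
      apply bot_unique
      rw [← hCa0]
      exact le_inf (le_inf (inf_le_left.trans hCaX) inf_le_right) inf_le_left
    have hCbX : Cb ⊓ X = ⊥ := by
      apply bot_unique
      rw [← hCb0]
      exact le_inf (le_inf inf_le_right (inf_le_left.trans hCbY)) inf_le_left
    -- (Ca ⊔ E) ⊓ (X ⊔ Y) = Ca, etc.
    have hCaE : (Ca ⊔ E) ⊓ (X ⊔ Y) = Ca := by
      rw [sup_inf_assoc_of_le _ hCaXY, inf_comm E, hEXY, sup_bot_eq]
    have hCbE : (Cb ⊔ E) ⊓ (X ⊔ Y) = Cb := by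
      rw [sup_inf_assoc_of_le _ hCbXY, inf_comm E, hEXY, sup_bot_eq]
    have hYE : (Y ⊔ E) ⊓ (X ⊔ Y) = Y := by
      rw [sup_inf_assoc_of_le _ le_sup_right, inf_comm E, hEXY, sup_bot_eq]
    have hXE : (X ⊔ E) ⊓ (X ⊔ Y) = X := by
      rw [sup_inf_assoc_of_le _ le_sup_left, inf_comm E, hEXY, sup_bot_eq]
    -- four disjointness facts
    have dW : Disjoint W (Ca ⊔ (Cb ⊔ E)) := by
      rw [disjoint_iff]
      apply bot_unique
      have step1 : (Ca ⊔ E) ⊓ Y ≤ ⊥ := by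
        rw [← hCaY]
        exact le_inf (inf_le_inf_left _ le_sup_right |>.trans hCaE.le) inf_le_right
      have step2 : Y ⊓ (Ca ⊔ (Cb ⊔ E)) ≤ Cb := by
        have : Ca ⊔ (Cb ⊔ E) = Cb ⊔ (Ca ⊔ E) := by
          rw [sup_left_comm]
        rw [this, inf_comm, sup_inf_assoc_of_le _ hCbY]
        exact sup_le le_rfl (le_trans (by rw [inf_comm] at step1 ⊢; exact step1) bot_le)
      calc W ⊓ (Ca ⊔ (Cb ⊔ E)) ≤ W ⊓ Cb := by
            refine le_inf inf_le_left ?_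
            exact le_trans (inf_le_inf_right _ hWY) step2
        _ = ⊥ := hCb0
    have dCa : Disjoint Ca (W ⊔ (Cb ⊔ E)) := by
      rw [disjoint_iff]
      apply bot_unique
      have h1 : W ⊔ (Cb ⊔ E) = Y ⊔ E := by rw [← sup_assoc, hCbS]
      rw [h1, ← hCaY]
      exact le_inf inf_le_left
        ((inf_le_inf_left _ le_rfl).trans
          ((le_inf inf_le_right (inf_le_left.trans hCaXY)).trans (by rw [inf_comm] at hYE ⊢; exact hYE.le)))
    have dCb : Disjoint Cb (W ⊔ (Ca ⊔ E)) := by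
      rw [disjoint_iff]
      apply bot_unique
      have h1 : W ⊔ (Ca ⊔ E) = X ⊔ E := by rw [← sup_assoc, hCaS]
      rw [h1, ← hCbX]
      exact le_inf inf_le_left
        ((le_inf inf_le_right (inf_le_left.trans hCbXY)).trans (by rw [inf_comm] at hXE ⊢; exact hXE.le))
    have dE : Disjoint E (W ⊔ (Ca ⊔ Cb)) := by
      refine Disjoint.mono_right ?_ (disjoint_iff.mpr (by rw [inf_comm]; exact hEXY)).symm.symm
      · exact sup_le (hWX.trans le_sup_left) (sup_le hCaXY hCbXY)
    -- independence
    have hind : iSupIndep (![W, Ca, Cb, E] : Fin 4 → Submodule F V) := by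
      intro i
      fin_cases i
      · refine Disjoint.mono_right ?_ dW
        refine iSup_le fun j => iSup_le fun hj => ?_
        fin_cases j
        · simp at hj
        · exact le_sup_left
        · exact le_sup_of_le_right le_sup_left
        · exact le_sup_of_le_right le_sup_right
      · refine Disjoint.mono_right ?_ dCa
        refine iSup_le fun j => iSup_le fun hj => ?_
        fin_cases j
        · exact le_sup_left
        · simp at hj
        · exact le_sup_of_le_right le_sup_left
        · exact le_sup_of_le_right le_sup_right
      · refine Disjoint.mono_right ?_ dCb
        refine iSup_le fun j => iSup_le fun hj => ?_
        fin_cases j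
        · exact le_sup_left
        · exact le_sup_of_le_right le_sup_left
        · simp at hj
        · exact le_sup_of_le_right le_sup_right
      · refine Disjoint.mono_right ?_ dE
        refine iSup_le fun j => iSup_le fun hj => ?_
        fin_cases j
        · exact le_sup_left
        · exact le_sup_of_le_right le_sup_left
        · exact le_sup_of_le_right le_sup_right
        · simp at hj
    -- spanning
    have hsup : iSup (![W, Ca, Cb, E] : Fin 4 → Submodule F V) = ⊤ := by
      apply le_antisymm le_top
      have htop : W ⊔ (Ca ⊔ (Cb ⊔ E)) = ⊤ := by
        have h2 : X ⊔ Cb = X ⊔ Y := by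
          rw [← hCbS, ← sup_assoc, sup_eq_left.mpr hWX]
        calc W ⊔ (Ca ⊔ (Cb ⊔ E)) = (W ⊔ Ca) ⊔ (Cb ⊔ E) := (sup_assoc _ _ _).symm
          _ = X ⊔ (Cb ⊔ E) := by rw [hCaS]
          _ = (X ⊔ Cb) ⊔ E := (sup_assoc _ _ _).symm
          _ = (X ⊔ Y) ⊔ E := by rw [h2]
          _ = ⊤ := hE.sup_eq_top
      rw [← htop]
      refine sup_le (by simpa using le_iSup (![W, Ca, Cb, E] : Fin 4 → Submodule F V) 0)
        (sup_le (by simpa using le_iSup (![W, Ca, Cb, E] : Fin 4 → Submodule F V) 1)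
          (sup_le (by simpa using le_iSup (![W, Ca, Cb, E] : Fin 4 → Submodule F V) 2)
            (by simpa using le_iSup (![W, Ca, Cb, E] : Fin 4 → Submodule F V) 3)))
    exact DirectSum.isInternal_submodule_of_iSupIndep_of_iSup_eq_top hind hsup
  obtain ⟨Ca, Cb, E, h1, h2, h3, h4, h5, h6, hE⟩ := decomp A B
  obtain ⟨Ca', Cb', E', h1', h2', h3', h4', h5', h6', hE'⟩ := decomp A' B'
  have hp := internal A B Ca Cb E h1 h2 h3 h4 h5 h6 hE
  have hp' := internal A' B' Ca' Cb' E' h1' h2' h3' h4' h5' h6' hE'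
  -- matching finranks
  have rk : ∀ (X Y Ca Cb E : Submodule F V), (X ⊓ Y) ⊓ Ca = ⊥ → (X ⊓ Y) ⊔ Ca = X →
      (X ⊓ Y) ⊓ Cb = ⊥ → (X ⊓ Y) ⊔ Cb = Y → IsCompl (X ⊔ Y) E →
      finrank F ↥(X ⊓ Y) + finrank F Ca = finrank F X ∧
      finrank F ↥(X ⊓ Y) + finrank F Cb = finrank F Y ∧
      finrank F ↥(X ⊔ Y) + finrank F E = finrank F V ∧
      finrank F ↥(X ⊔ Y) + finrank F ↥(X ⊓ Y) = finrank F X + finrank F Y := by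
    intro X Y Ca Cb E hCa0 hCaS hCb0 hCbS hE
    refine ⟨?_, ?_, ?_, ?_⟩
    · have := Submodule.finrank_sup_add_finrank_inf_eq (X ⊓ Y) Ca
      rw [hCa0, hCaS, finrank_bot, add_zero] at this
      exact this.symm
    · have := Submodule.finrank_sup_add_finrank_inf_eq (X ⊓ Y) Cb
      rw [hCb0, hCbS, finrank_bot, add_zero] at this
      exact this.symm
    · have := Submodule.finrank_sup_add_finrank_inf_eq (X ⊔ Y) E
      rw [hE.sup_eq_top, disjoint_iff.mp hE.disjoint, finrank_bot, add_zero, finrank_top] at this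
      exact this.symm
    · exact Submodule.finrank_sup_add_finrank_inf_eq X Y
  obtain ⟨e1, e2, e3, e4⟩ := rk A B Ca Cb E h2 h3 h5 h6 hE
  obtain ⟨e1', e2', e3', e4'⟩ := rk A' B' Ca' Cb' E' h2' h3' h5' h6' hE'
  have hf : ∀ i : Fin 4, finrank F (![A ⊓ B, Ca, Cb, E] i)
      = finrank F (![A' ⊓ B', Ca', Cb', E'] i) := by
    intro i
    fin_cases i
    · exact hI
    · show finrank F Ca = finrank F Ca'
      omega
    · show finrank F Cb = finrank F Cb'
      omega
    · show finrank F E = finrank F E'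
      omega
  obtain ⟨e, he⟩ := exists_auto _ _ hp hp' hf
  refine ⟨e, ?_, ?_⟩
  · rw [← h3, Submodule.map_sup, ← h3']
    rw [show Submodule.map (e : V →ₗ[F] V) (A ⊓ B) = A' ⊓ B' from he 0,
      show Submodule.map (e : V →ₗ[F] V) Ca = Ca' from he 1]
  · rw [← h6, Submodule.map_sup, ← h6']
    rw [show Submodule.map (e : V →ₗ[F] V) (A ⊓ B) = A' ⊓ B' from he 0,
      show Submodule.map (e : V →ₗ[F] V) Cb = Cb' from he 2]

lemma dS_map {F : Type} [Field F] {n : ℕ} (e : (Fin n → F) ≃ₗ[F] (Fin n → F))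
    (U C : Submodule F (Fin n → F)) :
    dS (U.map (e : (Fin n → F) →ₗ[F] (Fin n → F))) (C.map (e : (Fin n → F) →ₗ[F] (Fin n → F)))
      = dS U C := by
  unfold dS
  rw [← Submodule.map_sup, ← Submodule.map_inf ((e : (Fin n → F) →ₗ[F] (Fin n → F))) e.injective,
    LinearEquiv.finrank_map_eq, LinearEquiv.finrank_map_eq]

theorem stmt12 (F : Type) [Field F] [Fintype F] (n a b c u s w : ℕ)
    (A B A' B' : Submodule F (Fin n → F))
    (hA : Module.finrank F ↥A = a) (hB : Module.finrank F ↥B = b) (hAB : dS A B = w)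
    (hA' : Module.finrank F ↥A' = a) (hB' : Module.finrank F ↥B' = b) (hA'B' : dS A' B' = w) :
    Nat.card {C : Submodule F (Fin n → F) //
        Module.finrank F ↥C = c ∧ dS A C = u ∧ dS B C = s} =
      Nat.card {C : Submodule F (Fin n → F) //
        Module.finrank F ↥C = c ∧ dS A' C = u ∧ dS B' C = s} := by
  have e1 := Submodule.finrank_sup_add_finrank_inf_eq A B
  have e1' := Submodule.finrank_sup_add_finrank_inf_eq A' B'
  have m1 : finrank F ↥(A ⊓ B) ≤ finrank F ↥(A ⊔ B) :=
    Submodule.finrank_mono (inf_le_sup)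
  have m1' : finrank F ↥(A' ⊓ B') ≤ finrank F ↥(A' ⊔ B') :=
    Submodule.finrank_mono (inf_le_sup)
  unfold dS at hAB hA'B'
  rw [hA, hB] at e1
  rw [hA', hB'] at e1'
  have hI : finrank F ↥(A ⊓ B) = finrank F ↥(A' ⊓ B') := by omega
  obtain ⟨e, heA, heB⟩ := exists_equiv_pair A B A' B'
    (by rw [hA, hA']) (by rw [hB, hB']) hI
  refine Nat.card_congr (Equiv.subtypeEquiv (Submodule.orderIsoMapComap e).toEquiv ?_)
  intro C
  have hC : (Submodule.orderIsoMapComap e).toEquiv C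
      = C.map (e : (Fin n → F) →ₗ[F] (Fin n → F)) := rfl
  rw [hC, LinearEquiv.finrank_map_eq, ← heA, ← heB, dS_map, dS_map]
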